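/- Suppose a word x_{i_1}⋯x_{i_d} in the 0-Hecke monoid of a Coxeter group has a deletion pair {x_{i_r}, x_{i_s}} and a deletion pair {x_{i_s}, x_{i_t}} for positions r < s < t. Then the word x_{i_r}⋯ x̂_{i_s} ⋯ x_{i_t} obtained by deleting the middle position s from the segment from r to t is not reduced. -/
import Mathlib

open List

private theorem length_wordProd_mod_two {B W : Type*} [Group W] {M : CoxeterMatrix B}
    (cs : CoxeterSystem M W) (ω : List B) :
    cs.length (cs.wordProd ω) % 2 = ω.length % 2 := by
  induction ω with
  | nil => simp
  | cons i ω ih =>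
    rw [cs.wordProd_cons, cs.length_mul_mod_two, cs.length_simple, List.length_cons,
      Nat.add_mod, ih, ← Nat.add_mod, Nat.add_comm]

private theorem not_reduced_length_le {B W : Type*} [Group W] {M : CoxeterMatrix B}
    (cs : CoxeterSystem M W) {ω : List B} (h : ¬ cs.IsReduced ω) :
    cs.length (cs.wordProd ω) + 2 ≤ ω.length := by
  have hle := cs.length_wordProd_le ω
  have hne : cs.length (cs.wordProd ω) ≠ ω.length := h
  have hpar := length_wordProd_mod_two cs ω
  omega

/-- Suppose a word has consecutive segments `[x] ++ b ++ [y]` and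
`[y] ++ c ++ [z]`, each of which is a deletion pair: the segment is not reduced, but
deleting either endpoint yields a reduced word.  Then the word `[x] ++ b ++ c ++ [z]`,
obtained from the segment from `x` to `z` by deleting the middle letter `y`, is not
reduced. -/
theorem concat_deletionPairs_not_reduced {B W : Type*} [Group W] {M : CoxeterMatrix B}
    (cs : CoxeterSystem M W) (x y z : B) (b c : List B)
    (h1 : ¬ cs.IsReduced (x :: (b ++ [y])))
    (h2 : cs.IsReduced (b ++ [y]))
    (h3 : cs.IsReduced (x :: b))
    (h4 : ¬ cs.IsReduced (y :: (c ++ [z])))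
    (h5 : cs.IsReduced (c ++ [z]))
    (h6 : cs.IsReduced (y :: c)) :
    ¬ cs.IsReduced (x :: (b ++ c ++ [z])) := by
  have hA := not_reduced_length_le cs h1
  have hB := not_reduced_length_le cs h4
  have hsplit : cs.wordProd (x :: (b ++ c ++ [z])) =
      cs.wordProd (x :: (b ++ [y])) * cs.wordProd (y :: (c ++ [z])) := by
    simp only [cs.wordProd_cons, cs.wordProd_append, cs.wordProd_singleton]
    group
    simp [mul_assoc, cs.simple_mul_simple_cancel_left]
  intro hred
  have hlen : cs.length (cs.wordProd (x :: (b ++ c ++ [z]))) ≤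
      cs.length (cs.wordProd (x :: (b ++ [y]))) + cs.length (cs.wordProd (y :: (c ++ [z]))) := by
    rw [hsplit]; exact cs.length_mul_le _ _
  have := hred
  unfold CoxeterSystem.IsReduced at this
  simp only [List.length_cons, List.length_append, List.length_singleton, List.length_nil] at this hA hB
  omega
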